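/- Let t > 1 be a real number and let 𝒫 be a finite set of primes satisfying ∑_{p∈𝒫} p^{−t} ≤ 1 + (1 − ∑_{p∈𝒫} p^{−2t})^{1/2}. Then 1 − (1 − ∑_{p∈𝒫} p^{−2t})^{1/2} ≤ ∑_{p∈𝒫} p^{−t}, and consequently ∑_{p∈𝒫} p^{−t} ≥ ∑_{n∈ℕ₂(𝒫)} n^{−t}. -/

import Mathlib

/-- A nonempty set of natural numbers is *primitive* if no element of the set divides
another element of the set; the singleton set `{1}` is not considered primitive. -/
def Primitive (S : Set ℕ) : Prop :=
  S.Nonempty ∧ S ≠ {1} ∧ ∀ a ∈ S, ∀ b ∈ S, a ∣ b → a = b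

/-- `NSet P` is the set `ℕ(P)` of natural numbers all of whose prime factors lie in `P`
(the multiplicative semigroup generated by `P`, which contains `1`). -/
def NSet (P : Set ℕ) : Set ℕ :=
  {n : ℕ | 0 < n ∧ ∀ p : ℕ, p.Prime → p ∣ n → p ∈ P}

/-- `NkSet P k = ℕ_k(P)`: the elements of `ℕ(P)` with exactly `k` prime factors
counted with multiplicity. -/
def NkSet (P : Set ℕ) (k : ℕ) : Set ℕ :=
  {n ∈ NSet P | n.primeFactorsList.length = k}

/-- `NgeSet P k = ℕ_{≥k}(P)`: the elements of `ℕ(P)` with at least `k` prime factors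
counted with multiplicity. -/
def NgeSet (P : Set ℕ) (k : ℕ) : Set ℕ :=
  {n ∈ NSet P | k ≤ n.primeFactorsList.length}

lemma pfl_mul {p q : ℕ} (hp : p.Prime) (hq : q.Prime) (hpq : p ≤ q) :
    (p * q).primeFactorsList = [p, q] := by
  have hperm := Nat.perm_primeFactorsList_mul hp.ne_zero hq.ne_zero
  rw [Nat.primeFactorsList_prime hp, Nat.primeFactorsList_prime hq] at hperm
  refine List.Perm.eq_of_sortedLE (Nat.primeFactorsList_sorted _) ?_ hperm
  simp [List.sortedLE_iff_pairwise, hpq]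

lemma N2_eq (P : Finset ℕ) (hP : ∀ p ∈ P, Nat.Prime p) :
    NkSet ↑P 2 = ↑(((P ×ˢ P).filter fun x => x.1 ≤ x.2).image fun x => x.1 * x.2) := by
  ext n
  simp only [NkSet, NSet, Set.mem_setOf_eq, Finset.coe_image, Set.mem_image,
    Finset.mem_coe, Finset.mem_filter, Finset.mem_product]
  constructor
  · rintro ⟨⟨hn0, hdvd⟩, hlen⟩
    obtain ⟨a, b, hab⟩ := List.length_eq_two.mp hlen
    have ha : a.Prime := Nat.prime_of_mem_primeFactorsList (by rw [hab]; simp)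
    have hb : b.Prime := Nat.prime_of_mem_primeFactorsList (by rw [hab]; simp)
    have haP : a ∈ P := hdvd a ha (Nat.dvd_of_mem_primeFactorsList (by rw [hab]; simp))
    have hbP : b ∈ P := hdvd b hb (Nat.dvd_of_mem_primeFactorsList (by rw [hab]; simp))
    have hsorted := Nat.primeFactorsList_sorted n
    rw [hab] at hsorted
    have hle : a ≤ b := by
      have := hsorted
      simp [List.sortedLE_iff_pairwise, List.pairwise_cons] at this
      exact this
    refine ⟨(a, b), ⟨⟨haP, hbP⟩, hle⟩, ?_⟩
    have := Nat.prod_primeFactorsList hn0.ne'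
    rw [hab] at this
    simpa using this
  · rintro ⟨⟨p, q⟩, ⟨⟨hpP, hqP⟩, hle⟩, rfl⟩
    have hp := hP p hpP
    have hq := hP q hqP
    refine ⟨⟨Nat.mul_pos hp.pos hq.pos, ?_⟩, by rw [pfl_mul hp hq hle]; rfl⟩
    intro r hr hrdvd
    rcases (Nat.Prime.dvd_mul hr).mp hrdvd with h | h
    · rwa [(Nat.prime_dvd_prime_iff_eq hr hp).mp h]
    · rwa [(Nat.prime_dvd_prime_iff_eq hr hq).mp h]


/-- From the proof of Proposition 12 (Banks–Martin): if `t > 1` and `P` is a finite set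
of primes with `∑_{p∈P} p^{-t} ≤ 1 + (1 - ∑_{p∈P} p^{-2t})^{1/2}`, then also
`1 - (1 - ∑_{p∈P} p^{-2t})^{1/2} ≤ ∑_{p∈P} p^{-t}`, and consequently
`∑_{p∈P} p^{-t} ≥ ∑_{n∈ℕ₂(P)} n^{-t}`. -/
theorem lower_root_bound_and_N2 (t : ℝ) (ht : 1 < t) (P : Finset ℕ)
    (hP : ∀ p ∈ P, Nat.Prime p)
    (hineq : ∑ p ∈ P, (p : ℝ) ^ (-t) ≤
      1 + Real.sqrt (1 - ∑ p ∈ P, (p : ℝ) ^ (-(2 * t)))) :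
    1 - Real.sqrt (1 - ∑ p ∈ P, (p : ℝ) ^ (-(2 * t))) ≤ ∑ p ∈ P, (p : ℝ) ^ (-t) ∧
      ∑' n : NkSet ↑P 2, (n : ℝ) ^ (-t) ≤ ∑ p ∈ P, (p : ℝ) ^ (-t) := by
  set S := ∑ p ∈ P, (p : ℝ) ^ (-t) with hS
  set Q := ∑ p ∈ P, (p : ℝ) ^ (-(2 * t)) with hQ
  have hone : ∀ p ∈ P, (1 : ℝ) ≤ (p : ℝ) := fun p hp => by
    exact_mod_cast (hP p hp).one_lt.le
  have hQ0 : 0 ≤ Q := Finset.sum_nonneg fun p hp =>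
    Real.rpow_nonneg (by positivity) _
  have hS0 : 0 ≤ S := Finset.sum_nonneg fun p hp =>
    Real.rpow_nonneg (by positivity) _
  have hQS : Q ≤ S := by
    apply Finset.sum_le_sum
    intro p hp
    exact Real.rpow_le_rpow_of_exponent_le (hone p hp) (by linarith)
  have hQ1 : Q ≤ 1 := by
    by_contra h
    push_neg at h
    rw [Real.sqrt_eq_zero_of_nonpos (by linarith)] at hineq
    linarith
  have hsq : 1 - Q ≤ Real.sqrt (1 - Q) :=
    (Real.le_sqrt (by linarith) (by linarith)).mpr (by nlinarith)
  have part1 : 1 - Real.sqrt (1 - Q) ≤ S := by linarith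
  refine ⟨part1, ?_⟩
  -- key quadratic inequality
  have hkey : S ^ 2 + Q ≤ 2 * S := by
    have h1 : (S - 1) ^ 2 ≤ Real.sqrt (1 - Q) ^ 2 := by
      have := Real.sqrt_nonneg (1 - Q)
      nlinarith
    rw [Real.sq_sqrt (by linarith)] at h1
    nlinarith
  -- rewrite the tsum as a finite sum
  rw [N2_eq P hP]
  rw [Finset.tsum_subtype' (((P ×ˢ P).filter fun x : ℕ × ℕ => x.1 ≤ x.2).image fun x => x.1 * x.2)
    (fun m : ℕ => (m : ℝ) ^ (-t))]
  -- injectivity of the product map on ordered pairs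
  set A := (P ×ˢ P).filter fun x : ℕ × ℕ => x.1 ≤ x.2 with hA
  have hinj : Set.InjOn (fun x : ℕ × ℕ => x.1 * x.2) ↑A := by
    intro x hx y hy hxy
    simp only [hA, Finset.coe_filter, Finset.mem_coe, Finset.mem_product,
      Set.mem_setOf_eq] at hx hy
    have h1 := pfl_mul (hP _ hx.1.1) (hP _ hx.1.2) hx.2
    have h2 := pfl_mul (hP _ hy.1.1) (hP _ hy.1.2) hy.2
    simp only at hxy
    rw [hxy, h2] at h1
    exact Prod.ext (by simpa using congrArg (·.headI) h1.symm)
      (by simpa using congrArg (fun l => l.tail.headI) h1.symm)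
  rw [Finset.sum_image fun x hx y hy => hinj (Finset.mem_coe.mpr hx) (Finset.mem_coe.mpr hy)]
  -- each term factors
  have hterm : ∀ x ∈ A, ((x.1 * x.2 : ℕ) : ℝ) ^ (-t) = (x.1 : ℝ) ^ (-t) * (x.2 : ℝ) ^ (-t) := by
    intro x hx
    push_cast
    exact Real.mul_rpow (by positivity) (by positivity)
  rw [Finset.sum_congr rfl hterm]
  -- symmetrize: 2 * (sum over A) = S^2 + Q
  have hdouble : 2 * ∑ x ∈ A, (x.1 : ℝ) ^ (-t) * (x.2 : ℝ) ^ (-t) = S ^ 2 + Q := by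
    have hswap : ∑ x ∈ (P ×ˢ P).filter (fun x : ℕ × ℕ => x.2 < x.1),
        (x.1 : ℝ) ^ (-t) * (x.2 : ℝ) ^ (-t)
        = ∑ x ∈ (P ×ˢ P).filter (fun x : ℕ × ℕ => x.1 < x.2),
        (x.1 : ℝ) ^ (-t) * (x.2 : ℝ) ^ (-t) := by
      apply Finset.sum_nbij' (fun x => Prod.swap x) (fun x => Prod.swap x) <;>
        simp +contextual [Finset.mem_filter, Finset.mem_product, mul_comm]
    have hsplit : ∑ x ∈ A, (x.1 : ℝ) ^ (-t) * (x.2 : ℝ) ^ (-t)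
        = ∑ x ∈ (P ×ˢ P).filter (fun x : ℕ × ℕ => x.1 < x.2),
            (x.1 : ℝ) ^ (-t) * (x.2 : ℝ) ^ (-t)
          + ∑ x ∈ (P ×ˢ P).filter (fun x : ℕ × ℕ => x.1 = x.2),
            (x.1 : ℝ) ^ (-t) * (x.2 : ℝ) ^ (-t) := by
      rw [hA, ← Finset.sum_union]
      · apply Finset.sum_congr _ fun _ _ => rfl
        ext x
        simp only [Finset.mem_filter, Finset.mem_union, Finset.mem_product]
        constructor
        · rintro ⟨h, hle⟩
          rcases lt_or_eq_of_le hle with h' | h'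
          · exact Or.inl ⟨h, h'⟩
          · exact Or.inr ⟨h, h'⟩
        · rintro (⟨h, h'⟩ | ⟨h, h'⟩)
          · exact ⟨h, h'.le⟩
          · exact ⟨h, h'.le⟩
      · rw [Finset.disjoint_filter]
        intro x _ hlt heq
        exact absurd heq (ne_of_lt hlt)
    have htotal : ∑ x ∈ P ×ˢ P, (x.1 : ℝ) ^ (-t) * (x.2 : ℝ) ^ (-t) = S ^ 2 := by
      rw [Finset.sum_product]
      dsimp only
      rw [← Finset.sum_mul_sum, ← hS, sq]
    have htri : ∑ x ∈ P ×ˢ P, (x.1 : ℝ) ^ (-t) * (x.2 : ℝ) ^ (-t)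
        = ∑ x ∈ (P ×ˢ P).filter (fun x : ℕ × ℕ => x.1 < x.2),
            (x.1 : ℝ) ^ (-t) * (x.2 : ℝ) ^ (-t)
          + ∑ x ∈ (P ×ˢ P).filter (fun x : ℕ × ℕ => x.1 = x.2),
            (x.1 : ℝ) ^ (-t) * (x.2 : ℝ) ^ (-t)
          + ∑ x ∈ (P ×ˢ P).filter (fun x : ℕ × ℕ => x.2 < x.1),
            (x.1 : ℝ) ^ (-t) * (x.2 : ℝ) ^ (-t) := by
      rw [← Finset.sum_filter_add_sum_filter_not (P ×ˢ P) (fun x : ℕ × ℕ => x.1 ≤ x.2)]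
      have e1 : (P ×ˢ P).filter (fun x : ℕ × ℕ => ¬ x.1 ≤ x.2)
          = (P ×ˢ P).filter (fun x : ℕ × ℕ => x.2 < x.1) := by
        ext x; simp [not_le]
      rw [e1, ← hA, hsplit]
    have hdiag : ∑ x ∈ (P ×ˢ P).filter (fun x : ℕ × ℕ => x.1 = x.2),
        (x.1 : ℝ) ^ (-t) * (x.2 : ℝ) ^ (-t) = Q := by
      rw [hQ]
      apply Finset.sum_nbij' (fun x : ℕ × ℕ => x.1) (fun p => (p, p))
      · exact fun a ha => (Finset.mem_product.mp (Finset.mem_filter.mp ha).1).1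
      · exact fun p hp => Finset.mem_filter.mpr ⟨Finset.mem_product.mpr ⟨hp, hp⟩, rfl⟩
      · intro a ha
        exact Prod.ext_iff.mpr ⟨rfl, (Finset.mem_filter.mp ha).2⟩
      · intro a _; rfl
      · intro x hx
        simp only [Finset.mem_filter, Finset.mem_product] at hx
        have hx2 := hx.2
        rw [← hx2, ← Real.rpow_add]
        · ring_nf
        · have := hone x.1 hx.1.1
          linarith
    rw [hsplit]
    linarith [htotal, htri, hswap, hdiag]
  linarith
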